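/- Let B be a Hermitian n×n complex matrix and let μ be a finite Borel measure on ℂⁿ with μ({0}) = 0. Then the function ℝ → ℝ given by t ↦ ∫ (‖exp(t·B)·z‖²/‖z‖²) dμ(z) is well-defined and convex on ℝ. -/

import Mathlib

open Matrix MeasureTheory

-- helper: sum of squared norms as re of dot product
private lemma sum_sq_norm_eq_re_dot {n : ℕ} (x : Fin n → ℂ) :
    ∑ i, ‖x i‖ ^ 2 = (star x ⬝ᵥ x).re := by
  rw [dotProduct, Complex.re_sum]
  refine Finset.sum_congr rfl fun i _ => ?_
  simp [Complex.mul_re, Complex.sq_norm, Complex.normSq_apply]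

private lemma convexOn_exp_mul (a c : ℝ) (hc : 0 ≤ c) :
    ConvexOn ℝ Set.univ (fun t : ℝ => Real.exp (t * a) * c) := by
  refine ⟨convex_univ, fun x _ y _ p q hp hq hpq => ?_⟩
  simp only [smul_eq_mul]
  have h := convexOn_exp.2 (Set.mem_univ (x * a)) (Set.mem_univ (y * a)) hp hq hpq
  simp only [smul_eq_mul] at h
  have h2 : Real.exp ((p * x + q * y) * a) ≤ p * Real.exp (x * a) + q * Real.exp (y * a) := by
    calc Real.exp ((p * x + q * y) * a) = Real.exp (p * (x * a) + q * (y * a)) := by ring_nf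
    _ ≤ _ := h
  calc Real.exp ((p * x + q * y) * a) * c ≤ (p * Real.exp (x * a) + q * Real.exp (y * a)) * c :=
        mul_le_mul_of_nonneg_right h2 hc
  _ = p * (Real.exp (x * a) * c) + q * (Real.exp (y * a) * c) := by ring

private lemma convexOn_finset_sum {ι : Type*} (s : Finset ι) (f : ι → ℝ → ℝ)
    (h : ∀ i ∈ s, ConvexOn ℝ Set.univ (f i)) :
    ConvexOn ℝ Set.univ (fun t => ∑ i ∈ s, f i t) := by
  classical
  induction s using Finset.induction with
  | empty => simpa using convexOn_const (0 : ℝ) convex_univ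
  | @insert a s ha ih =>
      simp only [Finset.sum_insert ha]
      exact (h a (Finset.mem_insert_self a s)).add
        (ih fun i hi => h i (Finset.mem_insert_of_mem hi))

/-- for `B` Hermitian and `μ` a finite Borel measure on `ℂⁿ` with
`μ {0} = 0`, the function `t ↦ ∫ ‖exp (t • B) z‖² / ‖z‖² dμ(z)` is well-defined
(the integrand is integrable for every `t`) and convex on `ℝ`. -/
theorem integrable_and_convexOn_integral_sq_norm_exp_smul
    (n : ℕ) (B : Matrix (Fin n) (Fin n) ℂ) (hB : Bᴴ = B)
    [MeasurableSpace (EuclideanSpace ℂ (Fin n))] [BorelSpace (EuclideanSpace ℂ (Fin n))]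
    (μ : Measure (EuclideanSpace ℂ (Fin n))) [IsFiniteMeasure μ]
    (hμ0 : μ {0} = 0) :
    (∀ t : ℝ, Integrable
        (fun z : EuclideanSpace ℂ (Fin n) =>
          ‖Matrix.toEuclideanLin (NormedSpace.exp (t • B)) z‖ ^ 2 / ‖z‖ ^ 2) μ) ∧
      ConvexOn ℝ Set.univ
        (fun t : ℝ => ∫ z : EuclideanSpace ℂ (Fin n),
          ‖Matrix.toEuclideanLin (NormedSpace.exp (t • B)) z‖ ^ 2 / ‖z‖ ^ 2 ∂μ) := by
  classical
  have hB' : B.IsHermitian := hB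
  set U : Matrix (Fin n) (Fin n) ℂ := (hB'.eigenvectorUnitary : Matrix (Fin n) (Fin n) ℂ) with hUdef
  set lam : Fin n → ℝ := hB'.eigenvalues with hlam
  have hU1 : star U * U = 1 := Matrix.mem_unitaryGroup_iff'.mp hB'.eigenvectorUnitary.2
  have hU2 : U * star U = 1 := Matrix.mem_unitaryGroup_iff.mp hB'.eigenvectorUnitary.2
  have hUunit : IsUnit U := ⟨⟨U, star U, by exact hU2, by exact hU1⟩, rfl⟩
  have hUinv : U⁻¹ = star U := Matrix.inv_eq_left_inv hU1
  -- spectral form of exp (s • B)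
  have hspec : ∀ s : ℝ, NormedSpace.exp (s • B)
      = U * diagonal (fun i => Complex.exp ((s : ℂ) * (lam i : ℂ))) * star U := by
    intro s
    have h1 : s • B = U * diagonal (fun i => (s : ℂ) * (lam i : ℂ)) * star U := by
      have h2 : (fun i => (s : ℂ) * (lam i : ℂ)) = (s : ℂ) • (RCLike.ofReal ∘ lam) := by
        funext i; simp [Pi.smul_apply, smul_eq_mul]
      rw [h2, Matrix.diagonal_smul, Matrix.mul_smul, Matrix.smul_mul]
      conv_lhs => rw [hB'.spectral_theorem, Unitary.conjStarAlgAut_apply]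
      rw [← hUdef, ← hlam]
      ext i j
      simp [Complex.real_smul]
    rw [h1, ← hUinv, Matrix.exp_conj U _ hUunit, Matrix.exp_diagonal, hUinv]
    congr 1
    congr 1
    funext i
    rw [Pi.exp_def, Complex.exp_eq_exp_ℂ]
  -- exp (t • B) is Hermitian
  have hherm : ∀ t : ℝ, (NormedSpace.exp (t • B))ᴴ = NormedSpace.exp (t • B) := by
    intro t
    rw [← Matrix.exp_conjTranspose]
    congr 1
    have h : (t • B)ᴴ = t • Bᴴ := by
      ext i j
      simp [Matrix.conjTranspose_apply]
    rw [h, hB]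
  have hMM : ∀ t : ℝ, (NormedSpace.exp (t • B))ᴴ * NormedSpace.exp (t • B)
      = NormedSpace.exp ((2 * t) • B) := by
    intro t
    rw [hherm, ← Matrix.exp_add_of_commute _ _ (Commute.refl _)]
    congr 1
    rw [← add_smul]
    norm_num [two_mul]
  -- key pointwise formula
  have hkey : ∀ (t : ℝ) (z : EuclideanSpace ℂ (Fin n)),
      ‖Matrix.toEuclideanLin (NormedSpace.exp (t • B)) z‖ ^ 2
        = ∑ i, Real.exp ((2 * lam i) * t)
            * ‖(star U *ᵥ (WithLp.equiv 2 (Fin n → ℂ) z)) i‖ ^ 2 := by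
    intro t z
    set v : Fin n → ℂ := WithLp.equiv 2 (Fin n → ℂ) z with hv
    set M := NormedSpace.exp (t • B) with hM
    have h1 : ‖Matrix.toEuclideanLin M z‖ ^ 2 = ∑ i, ‖(M *ᵥ v) i‖ ^ 2 := by
      rw [EuclideanSpace.norm_eq, Real.sq_sqrt (by positivity)]
      rfl
    rw [h1, sum_sq_norm_eq_re_dot]
    have h2 : star (M *ᵥ v) ⬝ᵥ (M *ᵥ v) = star v ⬝ᵥ ((Mᴴ * M) *ᵥ v) := by
      rw [star_mulVec, Matrix.dotProduct_mulVec, Matrix.vecMul_vecMul,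
        Matrix.dotProduct_mulVec]
    rw [h2, hMM t, hspec (2 * t), ← Matrix.mulVec_mulVec, ← Matrix.mulVec_mulVec,
      Matrix.dotProduct_mulVec]
    have h3 : star v ᵥ* U = star (star U *ᵥ v) := by
      rw [star_mulVec, Matrix.star_eq_conjTranspose, Matrix.conjTranspose_conjTranspose]
    rw [h3]
    set w : Fin n → ℂ := star U *ᵥ v with hw
    simp only [dotProduct, Matrix.mulVec_diagonal, Pi.star_apply]
    rw [Complex.re_sum]
    refine Finset.sum_congr rfl fun i _ => ?_
    have hexp : Complex.exp (((2 * t : ℝ) : ℂ) * ((lam i : ℝ) : ℂ))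
        = (((Real.exp ((2 * lam i) * t)) : ℝ) : ℂ) := by
      rw [Complex.ofReal_exp]
      congr 1
      push_cast
      ring
    rw [hexp, mul_left_comm, mul_comm (star (w i)) (w i)]
    rw [Complex.star_def, Complex.mul_conj, ← Complex.ofReal_mul, Complex.ofReal_re,
      Complex.normSq_eq_norm_sq]
  -- convexity of the integrand in t, for each fixed z
  have hconv : ∀ z : EuclideanSpace ℂ (Fin n),
      ConvexOn ℝ Set.univ (fun t : ℝ =>
        ‖Matrix.toEuclideanLin (NormedSpace.exp (t • B)) z‖ ^ 2 / ‖z‖ ^ 2) := by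
    intro z
    have hfun : (fun t : ℝ =>
        ‖Matrix.toEuclideanLin (NormedSpace.exp (t • B)) z‖ ^ 2 / ‖z‖ ^ 2)
        = fun t : ℝ => ∑ i, Real.exp (t * (2 * lam i))
            * (‖(star U *ᵥ (WithLp.equiv 2 (Fin n → ℂ) z)) i‖ ^ 2 / ‖z‖ ^ 2) := by
      funext t
      rw [hkey t z, Finset.sum_div]
      refine Finset.sum_congr rfl fun i _ => ?_
      rw [mul_comm (2 * lam i) t, mul_div_assoc]
    rw [hfun]
    exact convexOn_finset_sum _ _ fun i _ => convexOn_exp_mul _ _ (by positivity)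
  -- integrability
  have hint : ∀ t : ℝ, Integrable (fun z : EuclideanSpace ℂ (Fin n) =>
      ‖Matrix.toEuclideanLin (NormedSpace.exp (t • B)) z‖ ^ 2 / ‖z‖ ^ 2) μ := by
    intro t
    set L := LinearMap.toContinuousLinearMap
      (Matrix.toEuclideanLin (NormedSpace.exp (t • B))) with hLdef
    have hLz : ∀ z : EuclideanSpace ℂ (Fin n),
        Matrix.toEuclideanLin (NormedSpace.exp (t • B)) z = L z := fun z => rfl
    have hmeas : Measurable (fun z : EuclideanSpace ℂ (Fin n) =>
        ‖Matrix.toEuclideanLin (NormedSpace.exp (t • B)) z‖ ^ 2 / ‖z‖ ^ 2) := by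
      apply Measurable.div
      · simp only [hLz]
        exact ((L.continuous.norm).pow 2).measurable
      · exact (continuous_norm.pow 2).measurable
    refine Integrable.mono' (integrable_const (‖L‖ ^ 2)) hmeas.aestronglyMeasurable
      (ae_of_all _ fun z => ?_)
    rw [Real.norm_of_nonneg (by positivity)]
    rcases eq_or_ne z 0 with rfl | hz
    · simp only [hLz, map_zero, norm_zero]
      rw [zero_pow two_ne_zero, zero_div]
      exact sq_nonneg _
    · rw [hLz, div_le_iff₀ (pow_pos (norm_pos_iff.mpr hz) 2)]
      calc ‖L z‖ ^ 2 ≤ (‖L‖ * ‖z‖) ^ 2 :=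
            pow_le_pow_left₀ (norm_nonneg _) (L.le_opNorm z) 2
        _ = ‖L‖ ^ 2 * ‖z‖ ^ 2 := by ring
  -- conclusion
  refine ⟨hint, convex_univ, fun s _ t _ a b ha hb hab => ?_⟩
  simp only [smul_eq_mul]
  have hcomb : ∀ z : EuclideanSpace ℂ (Fin n),
      ‖Matrix.toEuclideanLin (NormedSpace.exp ((a * s + b * t) • B)) z‖ ^ 2 / ‖z‖ ^ 2
        ≤ a * (‖Matrix.toEuclideanLin (NormedSpace.exp (s • B)) z‖ ^ 2 / ‖z‖ ^ 2)
          + b * (‖Matrix.toEuclideanLin (NormedSpace.exp (t • B)) z‖ ^ 2 / ‖z‖ ^ 2) := by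
    intro z
    have h := (hconv z).2 (Set.mem_univ s) (Set.mem_univ t) ha hb hab
    simpa using h
  calc (∫ z : EuclideanSpace ℂ (Fin n),
        ‖Matrix.toEuclideanLin (NormedSpace.exp ((a * s + b * t) • B)) z‖ ^ 2 / ‖z‖ ^ 2 ∂μ)
      ≤ ∫ z : EuclideanSpace ℂ (Fin n),
          (a * (‖Matrix.toEuclideanLin (NormedSpace.exp (s • B)) z‖ ^ 2 / ‖z‖ ^ 2)
            + b * (‖Matrix.toEuclideanLin (NormedSpace.exp (t • B)) z‖ ^ 2 / ‖z‖ ^ 2)) ∂μ :=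
        integral_mono (hint _) (((hint s).const_mul a).add ((hint t).const_mul b)) hcomb
    _ = a * (∫ z : EuclideanSpace ℂ (Fin n),
            ‖Matrix.toEuclideanLin (NormedSpace.exp (s • B)) z‖ ^ 2 / ‖z‖ ^ 2 ∂μ)
          + b * (∫ z : EuclideanSpace ℂ (Fin n),
            ‖Matrix.toEuclideanLin (NormedSpace.exp (t • B)) z‖ ^ 2 / ‖z‖ ^ 2 ∂μ) := by
        rw [integral_add ((hint s).const_mul a) ((hint t).const_mul b),
          integral_const_mul, integral_const_mul]
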